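/- arXiv:0908.0555 — 6 statements merged into one kernel-verified Lean document; each statement's English description precedes it below -/
import Mathlib

section
/- Fix g ≥ 1, L ≥ 2. The map φ sending a matrix M = I_{2g} + L·A in Sp_{2g}(ℤ) congruent to the identity mod L to the reduction of A mod L is a well-defined group homomorphism from Sp_{2g}(ℤ, L) to the additive group sp_{2g}(ℤ/L), i.e. φ(MN) = φ(M) + φ(N), the image of φ lands in sp_{2g}(ℤ/L), and the kernel of φ is Sp_{2g}(ℤ, L²). -/
open Matrix

abbrev Idx (g : ℕ) := Fin g ⊕ Fin g

/-- The standard symplectic matrix `Ω_g = [[0, I_g], [-I_g, 0]]`. -/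
def Omega (g : ℕ) (R : Type*) [CommRing R] : Matrix (Idx g) (Idx g) R :=
  Matrix.fromBlocks 0 1 (-1) 0

/-- `X` is a symplectic matrix: `Xᵀ Ω X = Ω`. -/
def IsSymp (g : ℕ) (R : Type*) [CommRing R] (X : Matrix (Idx g) (Idx g) R) : Prop :=
  Xᵀ * Omega g R * X = Omega g R

/-- `M` is congruent to the identity mod `L`. -/
def IsLevel (g L : ℕ) (M : Matrix (Idx g) (Idx g) ℤ) : Prop :=
  M.map (Int.cast : ℤ → ZMod L) = 1

/-- For `M = I + L·A`, `phi g L M` is the reduction of `A` mod `L`. -/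
def phi (g L : ℕ) (M : Matrix (Idx g) (Idx g) ℤ) : Matrix (Idx g) (Idx g) (ZMod L) :=
  ((M - 1).map (fun x => x / (L : ℤ))).map (Int.cast : ℤ → ZMod L)

lemma lvl_dvd {g L : ℕ} {M : Matrix (Idx g) (Idx g) ℤ} (h : IsLevel g L M)
    (i j : Idx g) : (L : ℤ) ∣ (M - 1) i j := by
  rw [← ZMod.intCast_zmod_eq_zero_iff_dvd]
  have := congrFun (congrFun h i) j
  simp only [Matrix.map_apply] at this
  simp [Matrix.sub_apply, this, Matrix.one_apply]

lemma decomp {g L : ℕ} (hL0 : (L:ℤ) ≠ 0) {M : Matrix (Idx g) (Idx g) ℤ}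
    (h : IsLevel g L M) :
    M = 1 + (L : ℤ) • ((M - 1).map (fun x => x / (L : ℤ))) := by
  ext i j
  have hd := lvl_dvd h i j
  have := Int.mul_ediv_cancel' hd
  simp only [Matrix.add_apply, Matrix.smul_apply, Matrix.map_apply, smul_eq_mul, this]
  simp [Matrix.sub_apply]

lemma phi_welldef {g L : ℕ} (hL0 : (L:ℤ) ≠ 0) (M A : Matrix (Idx g) (Idx g) ℤ)
    (h : M = 1 + (L : ℤ) • A) : phi g L M = A.map (Int.cast : ℤ → ZMod L) := by
  subst h
  ext i j
  simp only [phi, Matrix.map_apply, Matrix.sub_apply, Matrix.add_apply, Matrix.smul_apply,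
    smul_eq_mul]
  congr 1
  have : (1 : Matrix (Idx g) (Idx g) ℤ) i j + (L:ℤ) * A i j
      - (1 : Matrix (Idx g) (Idx g) ℤ) i j = (L:ℤ) * A i j := by ring
  rw [this, Int.mul_ediv_cancel_left _ hL0]

lemma Omega_map (g L : ℕ) :
    (Omega g ℤ).map (Int.cast : ℤ → ZMod L) = Omega g (ZMod L) := by
  ext (i|i) (j|j) <;>
    simp [Omega, Matrix.fromBlocks, Matrix.map_apply, Matrix.one_apply, apply_ite] <;>
      split <;> simp_all

lemma expand_mul {g : ℕ} (ℓ : ℤ) (A B : Matrix (Idx g) (Idx g) ℤ) :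
    (1 + ℓ • A) * (1 + ℓ • B) = 1 + ℓ • (A + B + ℓ • (A * B)) := by
  simp only [mul_add, add_mul, one_mul, mul_one, smul_add, smul_smul,
    smul_mul_assoc, mul_smul_comm]
  abel

lemma phi_hom {g L : ℕ} (hL0 : (L:ℤ) ≠ 0) (M N : Matrix (Idx g) (Idx g) ℤ)
    (hM : IsLevel g L M) (hN : IsLevel g L N) :
    phi g L (M * N) = phi g L M + phi g L N := by
  set A := (M - 1).map (fun x => x / (L : ℤ)) with hA
  set B := (N - 1).map (fun x => x / (L : ℤ)) with hB
  have hMA : M = 1 + (L : ℤ) • A := decomp hL0 hM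
  have hNB : N = 1 + (L : ℤ) • B := decomp hL0 hN
  have hMN : M * N = 1 + (L : ℤ) • (A + B + (L : ℤ) • (A * B)) := by
    rw [hMA, hNB, expand_mul]
  rw [phi_welldef hL0 _ _ hMN, phi_welldef hL0 _ _ hMA, phi_welldef hL0 _ _ hNB]
  ext i j
  simp only [Matrix.map_apply, Matrix.add_apply, Matrix.smul_apply, smul_eq_mul]
  push_cast
  simp [ZMod.natCast_self]

lemma expand_symp {g : ℕ} (ℓ : ℤ) (Om A : Matrix (Idx g) (Idx g) ℤ) :
    (1 + ℓ • A)ᵀ * Om * (1 + ℓ • A)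
      = Om + ℓ • (Aᵀ * Om + Om * A + ℓ • (Aᵀ * Om * A)) := by
  simp only [Matrix.transpose_add, Matrix.transpose_one, Matrix.transpose_smul,
    mul_add, add_mul, one_mul, mul_one, smul_add, smul_smul, smul_mul_assoc,
    mul_smul_comm]
  abel

lemma phi_sp {g L : ℕ} (hL0 : (L:ℤ) ≠ 0) (M : Matrix (Idx g) (Idx g) ℤ)
    (hs : IsSymp g ℤ M) (hM : IsLevel g L M) :
    (phi g L M)ᵀ * Omega g (ZMod L) + Omega g (ZMod L) * phi g L M = 0 := by
  set A := (M - 1).map (fun x => x / (L : ℤ)) with hA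
  have hMA : M = 1 + (L : ℤ) • A := decomp hL0 hM
  have h := hs
  rw [IsSymp, hMA, expand_symp] at h
  have hS0 : (L:ℤ) • (Aᵀ * Omega g ℤ + Omega g ℤ * A + (L:ℤ) • (Aᵀ * Omega g ℤ * A)) = 0 :=
    add_eq_left.mp h
  have hS : Aᵀ * Omega g ℤ + Omega g ℤ * A + (L:ℤ) • (Aᵀ * Omega g ℤ * A) = 0 := by
    ext i j
    have := congrFun (congrFun hS0 i) j
    simp only [Matrix.smul_apply, Matrix.zero_apply, smul_eq_mul] at this
    simp only [Matrix.zero_apply]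
    exact (mul_eq_zero.mp this).resolve_left hL0
  have h2 := congrArg (⇑((Int.castRingHom (ZMod L)).mapMatrix)) hS
  simp only [map_add, _root_.map_mul, map_zsmul, map_zero, RingHom.mapMatrix_apply] at h2
  rw [← Int.cast_smul_eq_zsmul (ZMod L)] at h2
  simp only [Int.cast_natCast, ZMod.natCast_self, zero_smul, add_zero] at h2
  rw [phi_welldef hL0 _ _ hMA]
  rw [Matrix.transpose_map] at h2
  simp only [Int.coe_castRingHom] at h2
  rw [Omega_map] at h2
  exact h2

lemma isLevel_iff {g n : ℕ} {M : Matrix (Idx g) (Idx g) ℤ} :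
    IsLevel g n M ↔ ∀ i j, (n:ℤ) ∣ (M - 1) i j := by
  constructor
  · intro h i j; exact lvl_dvd h i j
  · intro h
    ext i j
    have h2 := (ZMod.intCast_zmod_eq_zero_iff_dvd _ n).mpr (h i j)
    simp only [Matrix.sub_apply, Int.cast_sub, sub_eq_zero] at h2
    simp only [Matrix.map_apply, h2, Matrix.one_apply]
    split <;> simp

lemma phi_ker {g L : ℕ} (hL0 : (L:ℤ) ≠ 0) (M : Matrix (Idx g) (Idx g) ℤ)
    (hM : IsLevel g L M) : phi g L M = 0 ↔ IsLevel g (L ^ 2) M := by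
  set A := (M - 1).map (fun x => x / (L : ℤ)) with hA
  have hMA : M = 1 + (L : ℤ) • A := decomp hL0 hM
  have hfac : ∀ i j, (M - 1) i j = (L:ℤ) * A i j := fun i j =>
    (Int.mul_ediv_cancel' (lvl_dvd hM i j)).symm
  rw [phi_welldef hL0 _ _ hMA, isLevel_iff]
  constructor
  · intro h0 i j
    have := congrFun (congrFun h0 i) j
    simp only [Matrix.map_apply, Matrix.zero_apply] at this
    have hdvd : (L:ℤ) ∣ A i j := (ZMod.intCast_zmod_eq_zero_iff_dvd _ L).mp this
    rw [hfac]
    push_cast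
    rw [sq]
    exact mul_dvd_mul (dvd_refl _) hdvd
  · intro h
    ext i j
    simp only [Matrix.map_apply, Matrix.zero_apply]
    rw [ZMod.intCast_zmod_eq_zero_iff_dvd]
    have h2 := h i j
    rw [hfac i j] at h2
    push_cast at h2
    rw [sq] at h2
    exact (mul_dvd_mul_iff_left hL0).mp h2


/-- The map `φ : Sp_{2g}(ℤ, L) → sp_{2g}(ℤ/L)`, `I + L·A ↦ A mod L`, is a well-defined
group homomorphism whose image lands in the symplectic Lie algebra and whose kernel is
`Sp_{2g}(ℤ, L²)`. -/
theorem phi_hom_into_sp (g L : ℕ) (hg : 1 ≤ g) (hL : 2 ≤ L) :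
    -- well-definedness: `φ (I + L·A) = A mod L`
    (∀ (M A : Matrix (Idx g) (Idx g) ℤ), M = 1 + (L : ℤ) • A →
      phi g L M = A.map (Int.cast : ℤ → ZMod L)) ∧
    -- `φ` is a homomorphism: `φ(MN) = φ(M) + φ(N)`
    (∀ M N : Matrix (Idx g) (Idx g) ℤ, IsSymp g ℤ M → IsSymp g ℤ N →
      IsLevel g L M → IsLevel g L N → phi g L (M * N) = phi g L M + phi g L N) ∧
    -- the image lands in `sp_{2g}(ℤ/L)`
    (∀ M : Matrix (Idx g) (Idx g) ℤ, IsSymp g ℤ M → IsLevel g L M →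
      (phi g L M)ᵀ * Omega g (ZMod L) + Omega g (ZMod L) * phi g L M = 0) ∧
    -- the kernel of `φ` is `Sp_{2g}(ℤ, L²)`
    (∀ M : Matrix (Idx g) (Idx g) ℤ, IsSymp g ℤ M → IsLevel g L M →
      (phi g L M = 0 ↔ IsLevel g (L ^ 2) M)) := by
  have hL0 : (L : ℤ) ≠ 0 := by exact_mod_cast (by omega : L ≠ 0)
  refine ⟨fun M A h => phi_welldef hL0 M A h,
    fun M N _ _ hM hN => phi_hom hL0 M N hM hN,
    fun M hs hM => phi_sp hL0 M hs hM,
    fun M _ hM => phi_ker hL0 M hM⟩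
end

section
/- Fix g ≥ 1, a prime p, and k ≥ 1 with (p, k) ∉ {(2,1), (3,1)}. Then the short exact sequence 1 → sp_{2g}(ℤ/p) → Sp_{2g}(ℤ/p^{k+1}) → Sp_{2g}(ℤ/p^k) → 1 (induced by reduction mod p^k) does not split; i.e. there is no group homomorphism φ: Sp_{2g}(ℤ/p^k) → Sp_{2g}(ℤ/p^{k+1}) such that the composition with the reduction map Sp_{2g}(ℤ/p^{k+1}) → Sp_{2g}(ℤ/p^k) is the identity. -/
open Matrix

/-- The symplectic group `Sp_{2g}(R)` as a submonoid of the `2g × 2g` matrices (every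
element is in fact invertible). -/
def Sp (g : ℕ) (R : Type*) [CommRing R] : Submonoid (Matrix (Idx g) (Idx g) R) where
  carrier := {X | Xᵀ * Omega g R * X = Omega g R}
  one_mem' := by simp
  mul_mem' := by
    intro a b ha hb
    simp only [Set.mem_setOf_eq] at *
    rw [Matrix.transpose_mul]
    have h1 : bᵀ * aᵀ * Omega g R * (a * b) = bᵀ * (aᵀ * Omega g R * a) * b := by
      simp only [Matrix.mul_assoc]
    rw [h1, ha, hb]

/- ### Auxiliary lemmas -/

theorem aux_dvd_choose_two (p k : ℕ) (hp : p.Prime) (hk : 1 ≤ k) (h2 : p = 2 → 2 ≤ k) :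
    p ^ (k+1) ∣ (p^k).choose 2 * p^k := by
  have hd : 2 * ((p^k).choose 2 * p^k) = (p^k - 1) * p^(2*k) := by
    have := Nat.descFactorial_eq_factorial_mul_choose (p^k) 2
    simp [Nat.descFactorial_succ, Nat.descFactorial_one, Nat.factorial] at this
    calc 2 * ((p^k).choose 2 * p^k) = (2 * (p^k).choose 2) * p^k := by ring
    _ = ((p^k - 1) * p^k) * p^k := by rw [← this]
    _ = (p^k - 1) * p^(2*k) := by rw [two_mul, pow_add]; ring
  rcases eq_or_ne p 2 with rfl | hne
  · have hk2 := h2 rfl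
    have : 2^(k+2) ∣ (2^k - 1) * 2^(2*k) :=
      Dvd.dvd.mul_left (pow_dvd_pow 2 (by omega)) _
    rw [← hd] at this
    have h22 : (2:ℕ)^(k+2) = 2 * 2^(k+1) := by ring
    rw [h22] at this
    exact (Nat.mul_dvd_mul_iff_left (by norm_num : 0 < 2)).mp this
  · have hcop : Nat.Coprime (p^(k+1)) 2 :=
      Nat.Coprime.pow_left _ ((Nat.coprime_primes hp Nat.prime_two).mpr hne)
    have : p^(k+1) ∣ 2 * ((p^k).choose 2 * p^k) := by
      rw [hd]; exact Dvd.dvd.mul_left (pow_dvd_pow p (by omega)) _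
    exact (Nat.Coprime.dvd_of_dvd_mul_left hcop this)

theorem aux_dvd_choose_three (p k : ℕ) (hp : p.Prime) (hk : 1 ≤ k) (h2 : p = 2 → 2 ≤ k)
    (h3 : p = 3 → 2 ≤ k) : p ^ (k+1) ∣ (p^k).choose 3 * p^k := by
  have hd : 6 * ((p^k).choose 3 * p^k) = (p^k - 2) * (p^k - 1) * p^(2*k) := by
    have := Nat.descFactorial_eq_factorial_mul_choose (p^k) 3
    simp [Nat.descFactorial_succ, Nat.descFactorial_one, Nat.factorial] at this
    calc 6 * ((p^k).choose 3 * p^k) = (6 * (p^k).choose 3) * p^k := by ring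
    _ = ((p^k - 2) * ((p^k - 1) * p^k)) * p^k := by rw [← this]
    _ = (p^k - 2) * (p^k - 1) * p^(2*k) := by rw [two_mul, pow_add]; ring
  rcases eq_or_ne p 2 with rfl | hne2
  · have hk2 := h2 rfl
    have hsub : (2:ℕ)^k - 2 = 2 * (2^(k-1) - 1) := by
      have : (2:ℕ)^k = 2 * 2^(k-1) := by
        rw [← pow_succ']; congr 1; omega
      omega
    have hd2 : 3 * ((2^k).choose 3 * 2^k) = (2^(k-1) - 1) * (2^k - 1) * 2^(2*k) := by
      have h6 : 6 * ((2^k).choose 3 * 2^k) = 2 * ((2^(k-1) - 1) * (2^k - 1) * 2^(2*k)) := by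
        rw [hd, hsub]; ring
      omega
    have hcop : Nat.Coprime (2^(k+1)) 3 := Nat.Coprime.pow_left _ (by norm_num)
    refine hcop.dvd_of_dvd_mul_left ?_
    rw [hd2]
    exact Dvd.dvd.mul_left (pow_dvd_pow 2 (by omega)) _
  rcases eq_or_ne p 3 with rfl | hne3
  · have hk2 := h3 rfl
    have hd2 : 2 * ((3^k).choose 3 * 3^k) = (3^k - 2) * (3^k - 1) * 3^(2*k-1) := by
      have h6 : 6 * ((3^k).choose 3 * 3^k)
          = 3 * ((3^k - 2) * (3^k - 1) * 3^(2*k-1)) := by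
        rw [hd]
        have : (3:ℕ)^(2*k) = 3 * 3^(2*k-1) := by
          rw [← pow_succ']; congr 1; omega
        rw [this]; ring
      omega
    have hcop : Nat.Coprime (3^(k+1)) 2 := Nat.Coprime.pow_left _ (by norm_num)
    refine hcop.dvd_of_dvd_mul_left ?_
    rw [hd2]
    exact Dvd.dvd.mul_left (pow_dvd_pow 3 (by omega)) _
  · have hcop : Nat.Coprime (p^(k+1)) 6 := by
      have h2' : Nat.Coprime p 2 := (Nat.coprime_primes hp Nat.prime_two).mpr hne2
      have h3' : Nat.Coprime p 3 := (Nat.coprime_primes hp Nat.prime_three).mpr hne3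
      have h6 : Nat.Coprime p 6 := by
        have : (6:ℕ) = 2 * 3 := by norm_num
        rw [this]; exact Nat.Coprime.mul_right h2' h3'
      exact Nat.Coprime.pow_left _ h6
    refine hcop.dvd_of_dvd_mul_left ?_
    rw [hd]
    exact Dvd.dvd.mul_left (pow_dvd_pow p (by omega)) _

/-- Truncated binomial expansion for an element whose fourth power vanishes. -/
theorem aux_pow_expand {A : Type*} [Ring A] (x : A) (hx : x^4 = 0) (n : ℕ) (hn : 3 ≤ n) :
    (1 + x)^n = 1 + x * (n : A) + x^2 * ((n.choose 2 : ℕ) : A) + x^3 * ((n.choose 3 : ℕ) : A) := by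
  rw [add_comm (1:A) x, (Commute.one_right x).add_pow]
  rw [← Finset.sum_subset (Finset.range_subset_range.mpr (by omega : 4 ≤ n + 1))
    (fun m _ hm => by
      have h4 : 4 ≤ m := by simpa using hm
      have : x ^ m = 0 := by
        calc x ^ m = x^4 * x^(m-4) := by rw [← pow_add]; congr 1; omega
        _ = 0 := by rw [hx, zero_mul]
      simp [this])]
  simp [Finset.sum_range_succ, pow_succ, mul_assoc]

theorem aux_block_mem (g : ℕ) (R : Type*) [CommRing R] (B : Matrix (Fin g) (Fin g) R)
    (hB : Bᵀ = B) : fromBlocks 1 B 0 1 ∈ Sp g R := by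
  show (fromBlocks 1 B 0 1)ᵀ * Omega g R * fromBlocks 1 B 0 1 = Omega g R
  simp [Omega, fromBlocks_transpose, fromBlocks_multiply, hB]

theorem aux_std_block (g : ℕ) (R : Type*) [CommRing R] (i j : Fin g) (a : R) :
    (Matrix.single (Sum.inl i) (Sum.inr j) a : Matrix (Idx g) (Idx g) R)
      = fromBlocks 0 (Matrix.single i j a) 0 0 := by
  ext x y
  rcases x with x | x <;> rcases y with y | y <;>
    simp [Matrix.single, fromBlocks]

theorem aux_one_add_block (g : ℕ) (R : Type*) [CommRing R] (B : Matrix (Fin g) (Fin g) R) :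
    (1 : Matrix (Idx g) (Idx g) R) + fromBlocks 0 B 0 0 = fromBlocks 1 B 0 1 := by
  rw [← fromBlocks_one, fromBlocks_add]
  simp

theorem aux_std_transpose (g : ℕ) (R : Type*) [CommRing R] (i j : Fin g) (a : R) :
    (Matrix.single i j a)ᵀ = Matrix.single j i a := by
  ext x y
  simp [Matrix.single, Matrix.transpose_apply, and_comm]

/-- `1 + E_{(inl i0),(inr i0)}` is symplectic. -/
theorem aux_unipotent_mem (g : ℕ) (R : Type*) [CommRing R] (i0 : Fin g) :
    (1 : Matrix (Idx g) (Idx g) R) + Matrix.single (Sum.inl i0) (Sum.inr i0) 1 ∈ Sp g R := by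
  rw [aux_std_block, aux_one_add_block]
  exact aux_block_mem g R _ (aux_std_transpose g R i0 i0 1)


theorem aux_e_sq (g : ℕ) (R : Type*) [CommRing R] (i0 : Fin g) :
    (Matrix.single (Sum.inl i0) (Sum.inr i0) (1:R) : Matrix (Idx g) (Idx g) R) *
      Matrix.single (Sum.inl i0) (Sum.inr i0) (1:R) = 0 := by
  apply Matrix.single_mul_single_of_ne
  simp

/-- For `(p, k) ∉ {(2,1), (3,1)}`, the extension
`1 → sp_{2g}(ℤ/p) → Sp_{2g}(ℤ/p^{k+1}) → Sp_{2g}(ℤ/p^k) → 1` does not split: there is no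
group homomorphism `Sp_{2g}(ℤ/p^k) → Sp_{2g}(ℤ/p^{k+1})` splitting the reduction map. -/
theorem sp_reduction_not_split (g p k : ℕ) (hg : 1 ≤ g) (hp : p.Prime) (hk : 1 ≤ k)
    (h2 : ¬(p = 2 ∧ k = 1)) (h3 : ¬(p = 3 ∧ k = 1)) :
    ¬ ∃ φ : Sp g (ZMod (p ^ k)) →* Sp g (ZMod (p ^ (k + 1))),
      ∀ X : Sp g (ZMod (p ^ k)),
        ((φ X : Matrix (Idx g) (Idx g) (ZMod (p ^ (k + 1))))).map
            (ZMod.castHom (pow_dvd_pow p k.le_succ) (ZMod (p ^ k))) =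
          (X : Matrix (Idx g) (Idx g) (ZMod (p ^ k))) := by
  rintro ⟨φ, hφ⟩
  have hp2 : p = 2 → 2 ≤ k := fun h => by
    rcases Nat.lt_or_ge k 2 with h' | h'
    · exact absurd ⟨h, by omega⟩ h2
    · exact h'
  have hp3 : p = 3 → 2 ≤ k := fun h => by
    rcases Nat.lt_or_ge k 2 with h' | h'
    · exact absurd ⟨h, by omega⟩ h3
    · exact h'
  haveI : NeZero (p ^ (k+1)) := ⟨pow_ne_zero _ hp.ne_zero⟩
  haveI : NeZero (p ^ k) := ⟨pow_ne_zero _ hp.ne_zero⟩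
  have hn3 : 3 ≤ p ^ k := by
    rcases eq_or_ne p 2 with rfl | hne
    · calc (3:ℕ) ≤ 2^2 := by norm_num
      _ ≤ 2^k := Nat.pow_le_pow_right (by norm_num) (hp2 rfl)
    · have hp3' : 3 ≤ p := by
        rcases hp.two_le.lt_or_eq with h | h <;> omega
      calc (3:ℕ) = 3^1 := by norm_num
      _ ≤ p^1 := Nat.pow_le_pow_left hp3' 1
      _ ≤ p^k := Nat.pow_le_pow_right (by omega) hk
  set R := ZMod (p ^ (k+1)) with hRdef
  set S := ZMod (p ^ k) with hSdef
  set f := ZMod.castHom (pow_dvd_pow p k.le_succ) (ZMod (p ^ k)) with hfdef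
  set i0 : Fin g := ⟨0, hg⟩ with hi0
  set eS : Matrix (Idx g) (Idx g) S := Matrix.single (Sum.inl i0) (Sum.inr i0) 1 with heS
  set eR : Matrix (Idx g) (Idx g) R := Matrix.single (Sum.inl i0) (Sum.inr i0) 1 with heR
  have heS2 : eS * eS = 0 := aux_e_sq g S i0
  have heR2 : eR * eR = 0 := aux_e_sq g R i0
  -- the element X = 1 + eS of Sp over S
  set X : Sp g S := ⟨1 + eS, aux_unipotent_mem g S i0⟩ with hX
  -- X has order dividing p^k
  have hXpow : X ^ (p ^ k) = 1 := by
    apply Subtype.ext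
    show ((X : Matrix (Idx g) (Idx g) S)) ^ (p ^ k) = 1
    have h4 : eS ^ 4 = 0 := by
      rw [show (4:ℕ) = 2+2 from rfl, pow_add, sq, heS2, zero_mul]
    rw [show ((X : Matrix (Idx g) (Idx g) S)) = 1 + eS from rfl]
    rw [aux_pow_expand eS h4 (p^k) hn3]
    have hcast0 : ((p ^ k : ℕ) : Matrix (Idx g) (Idx g) S) = 0 := by
      rw [← map_natCast (algebraMap S (Matrix (Idx g) (Idx g) S)) (p^k),
        ZMod.natCast_self, map_zero]
    have he2 : eS ^ 2 = 0 := by rw [sq, heS2]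
    have he3 : eS ^ 3 = 0 := by rw [pow_succ, he2, zero_mul]
    rw [hcast0, he2, he3]
    simp
  -- Y is the matrix of φ X
  set Y : Matrix (Idx g) (Idx g) R := (φ X : Matrix (Idx g) (Idx g) R) with hY
  have hYpow : Y ^ (p ^ k) = 1 := by
    have h1 : (φ X) ^ (p ^ k) = 1 := by rw [← map_pow, hXpow, _root_.map_one]
    calc Y ^ (p^k) = ((φ X) ^ (p^k) : Sp g R) := by
          rw [hY, ← SubmonoidClass.coe_pow]
    _ = ((1 : Sp g R) : Matrix (Idx g) (Idx g) R) := by rw [h1]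
    _ = 1 := rfl
  -- Y reduces to 1 + eS
  have hYmap : Y.map f = 1 + eS := hφ X
  -- the lift 1 + eR also reduces to 1 + eS
  have hEmap : ((1 : Matrix (Idx g) (Idx g) R) + eR).map f = 1 + eS := by
    ext i j
    simp only [Matrix.map_apply, Matrix.add_apply, map_add, heR, heS]
    congr 1
    · by_cases h : i = j <;> simp [Matrix.one_apply, h]
    · simp only [Matrix.single, Matrix.of_apply]
      by_cases h : Sum.inl i0 = i ∧ Sum.inr i0 = j <;> simp [h]
  -- π := p^k in R satisfies π^2 = 0 and π ≠ 0
  set π : R := ((p ^ k : ℕ) : R) with hπ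
  have hππ : π * π = 0 := by
    rw [hπ, ← Nat.cast_mul, ← pow_add, ZMod.natCast_eq_zero_iff]
    exact pow_dvd_pow p (by omega)
  have hπne : π ≠ 0 := by
    rw [hπ, Ne, ZMod.natCast_eq_zero_iff,
      Nat.pow_dvd_pow_iff_le_right hp.one_lt]
    omega
  -- kernel of f consists of multiples of π
  have hker : ∀ x : R, f x = 0 → ∃ y : R, x = π * y := by
    intro x hx
    obtain ⟨m, rfl⟩ := ZMod.natCast_zmod_surjective x
    rw [map_natCast, ZMod.natCast_eq_zero_iff] at hx
    obtain ⟨c, rfl⟩ := hx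
    refine ⟨(c : R), ?_⟩
    rw [hπ]
    push_cast
    ring
  -- write Y = 1 + eR + π • A
  have hentry : ∀ i j, ∃ a : R, Y i j - ((1 : Matrix (Idx g) (Idx g) R) + eR) i j = π * a := by
    intro i j
    apply hker
    rw [map_sub]
    have h1 : f (Y i j) = (Y.map f) i j := rfl
    have h2 : f (((1 : Matrix (Idx g) (Idx g) R) + eR) i j)
        = (((1 : Matrix (Idx g) (Idx g) R) + eR).map f) i j := rfl
    rw [h1, h2, hYmap, hEmap, sub_self]
  set A : Matrix (Idx g) (Idx g) R := Matrix.of (fun i j => (hentry i j).choose) with hA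
  set M : Matrix (Idx g) (Idx g) R := eR + π • A with hM
  have hYeq : Y = 1 + M := by
    ext i j
    have hs := (hentry i j).choose_spec
    have hAij : A i j = (hentry i j).choose := rfl
    rw [← hAij, Matrix.add_apply] at hs
    simp only [hM, Matrix.add_apply, Matrix.smul_apply, smul_eq_mul]
    linear_combination hs
  -- powers of M
  have hM2 : M * M = π • (eR * A + A * eR) := by
    rw [hM]
    simp only [mul_add, add_mul, Matrix.smul_mul, Matrix.mul_smul, smul_smul, hππ, zero_smul,
      heR2, smul_add]
    abel
  have hM3 : (M * M) * M = π • (eR * (A * eR)) := by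
    rw [hM2, hM]
    simp only [Matrix.smul_mul, Matrix.mul_smul, smul_smul, hππ, zero_smul, add_mul, mul_add,
      smul_add, mul_assoc, heR2, mul_zero, add_zero, zero_add, smul_zero]
  have hM4 : M ^ 4 = 0 := by
    have h4 : M ^ 4 = ((M * M) * M) * M := by
      rw [show (4:ℕ) = 2+2 from rfl, pow_add, sq, ← mul_assoc]
    rw [h4, hM3, hM]
    simp only [Matrix.smul_mul, Matrix.mul_smul, smul_smul, hππ, zero_smul, mul_add,
      smul_add, mul_assoc, heR2, mul_zero, smul_zero, add_zero, zero_add]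
  -- multiplication by natural number casts
  have hmulcast : ∀ (N : Matrix (Idx g) (Idx g) R) (c : ℕ),
      N * ((c : ℕ) : Matrix (Idx g) (Idx g) R) = ((c : ℕ) : R) • N := by
    intro N c
    rw [← map_natCast (algebraMap R (Matrix (Idx g) (Idx g) R)) c, ← Algebra.commutes,
      ← Algebra.smul_def]
  -- compute Y ^ (p^k)
  have hfinal : Y ^ (p ^ k) = 1 + π • eR := by
    rw [hYeq, aux_pow_expand M hM4 (p^k) hn3]
    rw [hmulcast, hmulcast, hmulcast]
    have hc2 : (((p^k).choose 2 : ℕ) : R) • M^2 = 0 := by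
      rw [sq, hM2, smul_smul, hπ, ← Nat.cast_mul]
      have : (((p^k).choose 2 * p^k : ℕ) : R) = 0 := by
        rw [ZMod.natCast_eq_zero_iff]
        exact aux_dvd_choose_two p k hp hk hp2
      rw [this, zero_smul]
    have hc3 : (((p^k).choose 3 : ℕ) : R) • M^3 = 0 := by
      have h3eq : M^3 = (M * M) * M := by
        rw [pow_succ, sq]
      rw [h3eq, hM3, smul_smul, hπ, ← Nat.cast_mul]
      have : (((p^k).choose 3 * p^k : ℕ) : R) = 0 := by
        rw [ZMod.natCast_eq_zero_iff]
        exact aux_dvd_choose_three p k hp hk hp2 hp3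
      rw [this, zero_smul]
    have hc1 : ((p^k : ℕ) : R) • M = π • eR := by
      rw [hM, smul_add, smul_smul, hππ, zero_smul, add_zero]
    rw [hc1, hc2, hc3, add_zero, add_zero]
  rw [hYpow] at hfinal
  have hsmul0 : π • eR = 0 := by
    have := hfinal.symm
    rwa [add_eq_left] at this
  have : (π • eR) (Sum.inl i0) (Sum.inr i0) = π := by
    rw [Matrix.smul_apply, heR]
    simp [Matrix.single]
  rw [hsmul0] at this
  exact hπne (by simpa using this.symm)
end

section
/- Fix g ≥ 1, a prime p, and k ≥ 1 with p^k ≥ 4. Let E be the 2g×2g matrix over ℤ/p^{k+1} with a 1 at position (1, g+1) and zeros elsewhere, and let A be any 2g×2g matrix over ℤ/p^{k+1}. Then (I + E + p^k·A)^{p^k} = I + p^k·E ≠ I. In particular, I + E + p^k·A has order strictly greater than p^k in the multiplicative monoid of matrices. -/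
open Matrix

lemma pow_formula_aux {R S : Type*} [CommRing R] [Ring S] [Algebra R S]
    (c : R) (E A : S) (hE : E * E = 0) (hc : c * c = 0) (n : ℕ) :
    (1 + E + c • A) ^ n = 1 + (n : R) • E +
      c • ((n : R) • A + ((n.choose 2 : ℕ) : R) • (E * A + A * E)
        + ((n.choose 3 : ℕ) : R) • (E * A * E)) := by
  induction n with
  | zero => simp
  | succ n ih =>
    rw [pow_succ, ih]
    have h3 : E * A * E * E = 0 := by rw [mul_assoc, hE, mul_zero]
    have hch2 : ((n+1).choose 2 : ℕ) = n.choose 2 + n := by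
      rw [Nat.choose_succ_succ]; simp [Nat.choose_one_right, Nat.add_comm]
    have hch3 : ((n+1).choose 3 : ℕ) = n.choose 3 + n.choose 2 := by
      rw [Nat.choose_succ_succ]; exact Nat.add_comm _ _
    rw [hch2, hch3]
    push_cast
    simp only [mul_add, add_mul, one_mul, mul_one, smul_mul_assoc, mul_smul_comm,
      smul_smul, hE, h3, smul_zero, zero_smul, mul_zero, zero_mul, add_zero, zero_add,
      mul_assoc, smul_add, hc]
    match_scalars
    any_goals ring
    all_goals rw [pow_two, hc, zero_mul]

lemma pow_of_sq_eq_zero {S : Type*} [Ring S] (X : S) (h : X * X = 0) (n : ℕ) :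
    (1 + X) ^ n = 1 + n • X := by
  induction n with
  | zero => simp
  | succ n ih =>
    rw [pow_succ, ih, succ_nsmul]
    have : (n • X) * X = 0 := by
      rw [smul_mul_assoc, h, smul_zero]
    rw [mul_add, mul_one, add_mul, one_mul, this, add_zero]
    abel

/-- With `E` the matrix having a single `1` at position `(1, g+1)` over `ℤ/p^{k+1}` and
`p^k ≥ 4`, for any matrix `A` we have `(I + E + p^k·A)^{p^k} = I + p^k·E ≠ I`; in particular
`I + E + p^k·A` has multiplicative order strictly greater than `p^k`. -/
theorem pow_one_add_elementary_add (g p k : ℕ) (hg : 0 < g) (hp : p.Prime) (hk : 1 ≤ k)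
    (hpk : 4 ≤ p ^ k) (A : Matrix (Idx g) (Idx g) (ZMod (p ^ (k + 1)))) :
    letI R := ZMod (p ^ (k + 1))
    letI E : Matrix (Idx g) (Idx g) R :=
      Matrix.single (Sum.inl ⟨0, hg⟩) (Sum.inr ⟨0, hg⟩) 1
    (1 + E + ((p ^ k : ℕ) : R) • A) ^ (p ^ k) = 1 + ((p ^ k : ℕ) : R) • E ∧
    1 + ((p ^ k : ℕ) : R) • E ≠ 1 ∧
    p ^ k < orderOf (1 + E + ((p ^ k : ℕ) : R) • A) := by
  set E : Matrix (Idx g) (Idx g) (ZMod (p ^ (k + 1))) :=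
    Matrix.single (Sum.inl ⟨0, hg⟩) (Sum.inr ⟨0, hg⟩) 1 with hE_def
  set c : ZMod (p ^ (k + 1)) := ((p ^ k : ℕ) : ZMod (p ^ (k + 1))) with hc_def
  have hppos : 0 < p := hp.pos
  have hE2 : E * E = 0 := by
    rw [hE_def]
    simp
  have hcast0 : ∀ m : ℕ, p ^ (k + 1) ∣ m → ((m : ℕ) : ZMod (p ^ (k + 1))) = 0 := by
    intro m hm
    exact (ZMod.natCast_eq_zero_iff m _).mpr hm
  have hc2 : c * c = 0 := by
    rw [hc_def, ← Nat.cast_mul]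
    exact hcast0 _ (by rw [← pow_add]; exact pow_dvd_pow p (by omega))
  -- p divides the binomial coefficients C(p^k, 2) and C(p^k, 3)
  have hchoose : ∀ j : ℕ, j ≠ 0 → j ≠ p ^ k → (c * (((p ^ k).choose j : ℕ) : ZMod (p ^ (k + 1)))) = 0 := by
    intro j hj0 hjp
    have hdvd : p ∣ (p ^ k).choose j := Nat.Prime.dvd_choose_pow hp hj0 hjp
    rw [hc_def, ← Nat.cast_mul]
    apply hcast0
    rw [pow_succ]
    exact mul_dvd_mul dvd_rfl hdvd
  have h2ne : (2 : ℕ) ≠ p ^ k := by omega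
  have h3ne : (3 : ℕ) ≠ p ^ k := by omega
  -- main power computation
  have hmain : (1 + E + c • A) ^ (p ^ k) = 1 + c • E := by
    rw [pow_formula_aux c E A hE2 hc2 (p ^ k)]
    rw [smul_add, smul_add, smul_smul, smul_smul, smul_smul]
    rw [hc2, hchoose 2 (by norm_num) h2ne, hchoose 3 (by norm_num) h3ne]
    simp [hc_def]
  refine ⟨hmain, ?_, ?_⟩
  · -- 1 + c • E ≠ 1
    intro h
    have h0 : c • E = 0 := by
      have := add_left_cancel (a := (1 : Matrix (Idx g) (Idx g) (ZMod (p ^ (k + 1)))))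
        (by rw [h, add_zero] : 1 + c • E = 1 + 0)
      exact this
    have hc0 : c = 0 := by
      have := congrFun (congrFun h0 (Sum.inl ⟨0, hg⟩)) (Sum.inr ⟨0, hg⟩)
      simpa [hE_def, Matrix.smul_apply, Matrix.single_apply_same] using this
    have : p ^ (k + 1) ∣ p ^ k := (ZMod.natCast_eq_zero_iff _ _).mp hc0
    have hle : p ^ (k + 1) ≤ p ^ k := Nat.le_of_dvd (by positivity) this
    have hlt : p ^ k < p ^ (k + 1) := Nat.pow_lt_pow_right hp.one_lt k.lt_succ_self
    omega
  · -- order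
    have hEE : (c • E) * (c • E) = 0 := by
      rw [smul_mul_assoc, mul_smul_comm, hE2, smul_zero, smul_zero]
    have hsmul : p • (c • E) = 0 := by
      rw [← Nat.cast_smul_eq_nsmul (ZMod (p ^ (k + 1))), smul_smul, hc_def, ← Nat.cast_mul]
      rw [hcast0 (p * p ^ k) (by rw [pow_succ]; exact ⟨1, by ring⟩)]
      simp
    have hpow1 : (1 + E + c • A) ^ (p ^ (k + 1)) = 1 := by
      have h1 : ((1 + E + c • A) ^ (p ^ k)) ^ p = 1 := by
        rw [hmain, pow_of_sq_eq_zero _ hEE, hsmul, add_zero]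
      calc (1 + E + c • A) ^ (p ^ (k + 1))
          = (1 + E + c • A) ^ (p ^ k * p) := congrArg (fun n => (1 + E + c • A) ^ n) (pow_succ p k)
        _ = ((1 + E + c • A) ^ (p ^ k)) ^ p := pow_mul _ _ _
        _ = 1 := h1
    have hne1 : (1 + E + c • A) ^ (p ^ k) ≠ 1 := by
      rw [hmain]
      intro h
      have h0 : c • E = 0 := add_left_cancel (by rw [h, add_zero] : 1 + c • E = 1 + 0)
      have hc0 : c = 0 := by
        have := congrFun (congrFun h0 (Sum.inl ⟨0, hg⟩)) (Sum.inr ⟨0, hg⟩)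
        simpa [hE_def, Matrix.smul_apply, Matrix.single_apply_same] using this
      have : p ^ (k + 1) ∣ p ^ k := (ZMod.natCast_eq_zero_iff _ _).mp hc0
      have hle : p ^ (k + 1) ≤ p ^ k := Nat.le_of_dvd (by positivity) this
      have hlt : p ^ k < p ^ (k + 1) := Nat.pow_lt_pow_right hp.one_lt k.lt_succ_self
      omega
    have hdvd : orderOf (1 + E + c • A) ∣ p ^ (k + 1) :=
      orderOf_dvd_of_pow_eq_one hpow1
    obtain ⟨j, hjle, hj⟩ := (Nat.dvd_prime_pow hp).mp hdvd
    have hjk : j = k + 1 := by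
      by_contra hne
      have hjk' : j ≤ k := by omega
      have : orderOf (1 + E + c • A) ∣ p ^ k := hj ▸ pow_dvd_pow p hjk'
      exact hne1 (orderOf_dvd_iff_pow_eq_one.mp this)
    rw [hj, hjk]
    exact Nat.pow_lt_pow_right hp.one_lt k.lt_succ_self
end

section
/- Let G be a group, let G = G₁ × G₂ be a direct product decomposition, and let M be a G-module on which the factor G₂ acts trivially. If H₁(G₂; ℤ) = 0 (i.e., G₂ is perfect), then the projection G → G₁ induces isomorphisms H₁(G; M) ≅ H₁(G₁; M) and H¹(G; M) ≅ H¹(G₁; M). -/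
/-! First group homology and cohomology, defined via the bar resolution. -/

section Defs

variable (G : Type*) [Group G] (M : Type*) [AddCommGroup M] [DistribMulAction G M]

/-- The boundary map `d₁ : ℤ[G] ⊗ M → M`, `[g] ⊗ m ↦ g⁻¹ • m − m`. -/
noncomputable def barD1 : (G →₀ M) →+ M :=
  Finsupp.liftAddHom fun g => DistribMulAction.toAddMonoidHom M g⁻¹ - AddMonoidHom.id M

/-- The boundary map `d₂`, `[g|h] ⊗ m ↦ [h] ⊗ (g⁻¹ • m) − [g h] ⊗ m + [g] ⊗ m`. -/
noncomputable def barD2 : ((G × G) →₀ M) →+ (G →₀ M) :=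
  Finsupp.liftAddHom fun p =>
    (Finsupp.singleAddHom p.2).comp (DistribMulAction.toAddMonoidHom M p.1⁻¹)
      - Finsupp.singleAddHom (p.1 * p.2) + Finsupp.singleAddHom p.1

/-- First group homology `H₁(G; M) = ker d₁ / im d₂`. -/
noncomputable def GroupH1 :=
  (barD1 G M).ker ⧸ ((barD2 G M).range.addSubgroupOf (barD1 G M).ker)

noncomputable instance : AddCommGroup (GroupH1 G M) :=
  QuotientAddGroup.Quotient.addCommGroup _

/-- The group of 1-cocycles (crossed homomorphisms) `f : G → M`,
`f (g h) = f g + g • f h`. -/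
def cocycles1 : AddSubgroup (G → M) where
  carrier := {f | ∀ g h : G, f (g * h) = f g + g • f h}
  zero_mem' := by intro g h; simp
  add_mem' := by
    intro f₁ f₂ h₁ h₂ g h
    simp only [Pi.add_apply, h₁ g h, h₂ g h, smul_add]
    abel
  neg_mem' := by
    intro f hf g h
    simp only [Pi.neg_apply, hf g h, smul_neg]
    abel

/-- The group of 1-coboundaries: `f g = g • m − m` for some `m`. -/
def coboundaries1 : AddSubgroup (G → M) where
  carrier := {f | ∃ m : M, ∀ g : G, f g = g • m - m}
  zero_mem' := ⟨0, by simp⟩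
  add_mem' := by
    rintro f₁ f₂ ⟨m₁, h₁⟩ ⟨m₂, h₂⟩
    exact ⟨m₁ + m₂, fun g => by simp only [Pi.add_apply, h₁ g, h₂ g, smul_add]; abel⟩
  neg_mem' := by
    rintro f ⟨m, hm⟩
    exact ⟨-m, fun g => by simp only [Pi.neg_apply, hm g, smul_neg]; abel⟩

/-- First group cohomology `H¹(G; M)`: crossed homomorphisms modulo principal ones. -/
def GroupCoh1 := (cocycles1 G M) ⧸ ((coboundaries1 G M).addSubgroupOf (cocycles1 G M))

noncomputable instance : AddCommGroup (GroupCoh1 G M) :=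
  QuotientAddGroup.Quotient.addCommGroup _

end Defs

section Aux

variable {G : Type*} [Group G] {M : Type*} [AddCommGroup M] [DistribMulAction G M]

theorem barD1_single (g : G) (m : M) : barD1 G M (Finsupp.single g m) = g⁻¹ • m - m := by
  simp [barD1]

theorem barD2_single (p : G × G) (m : M) :
    barD2 G M (Finsupp.single p m) =
      Finsupp.single p.2 (p.1⁻¹ • m) - Finsupp.single (p.1 * p.2) m + Finsupp.single p.1 m := by
  simp [barD2]

theorem barD1_comp_barD2 : (barD1 G M).comp (barD2 G M) = 0 := by
  refine Finsupp.addHom_ext fun p m => ?_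
  simp only [AddMonoidHom.comp_apply, barD2_single, map_sub, map_add, barD1_single,
    AddMonoidHom.zero_apply, mul_inv_rev, mul_smul]
  abel

end Aux

set_option linter.unusedSectionVars false

section Product

variable {G₁ G₂ M : Type*} [Group G₁] [Group G₂] [AddCommGroup M]
  [DistribMulAction (G₁ × G₂) M] [DistribMulAction G₁ M]

/-- Push-forward of chains along the projection `G₁ × G₂ → G₁`. -/
noncomputable def pushPi : ((G₁ × G₂) →₀ M) →+ (G₁ →₀ M) :=
  Finsupp.liftAddHom fun g => Finsupp.singleAddHom g.1

/-- Push-forward of chains along the inclusion `G₁ → G₁ × G₂`. -/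
noncomputable def pushSigma : (G₁ →₀ M) →+ ((G₁ × G₂) →₀ M) :=
  Finsupp.liftAddHom fun a => Finsupp.singleAddHom (a, 1)

/-- Push-forward of 2-chains along the projection. -/
noncomputable def pairPi : (((G₁ × G₂) × (G₁ × G₂)) →₀ M) →+ ((G₁ × G₁) →₀ M) :=
  Finsupp.liftAddHom fun p => Finsupp.singleAddHom (p.1.1, p.2.1)

/-- Push-forward of 2-chains along the inclusion. -/
noncomputable def pairSigma : ((G₁ × G₁) →₀ M) →+ (((G₁ × G₂) × (G₁ × G₂)) →₀ M) :=
  Finsupp.liftAddHom fun p => Finsupp.singleAddHom ((p.1, 1), (p.2, 1))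

@[simp] theorem pushPi_single (g : G₁ × G₂) (m : M) :
    pushPi (Finsupp.single g m) = Finsupp.single g.1 m := by simp [pushPi]

@[simp] theorem pushSigma_single (a : G₁) (m : M) :
    pushSigma (Finsupp.single a m) = Finsupp.single ((a, 1) : G₁ × G₂) m := by simp [pushSigma]

variable (hcompat : ∀ (a : G₁) (m : M), ((a, 1) : G₁ × G₂) • m = a • m)
  (htriv : ∀ (b : G₂) (m : M), ((1, b) : G₁ × G₂) • m = m)

include hcompat htriv in
theorem smul_pair (a : G₁) (b : G₂) (m : M) : ((a, b) : G₁ × G₂) • m = a • m := by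
  have h : ((a, b) : G₁ × G₂) = (a, 1) * (1, b) := by simp
  rw [h, mul_smul, htriv, hcompat]

include hcompat htriv in
theorem d1_comp_pushPi : (barD1 G₁ M).comp pushPi = barD1 (G₁ × G₂) M := by
  refine Finsupp.addHom_ext fun g m => ?_
  obtain ⟨a, b⟩ := g
  simp only [AddMonoidHom.comp_apply, pushPi_single, barD1_single, Prod.inv_mk,
    smul_pair hcompat htriv]

include hcompat in
theorem d1_comp_pushSigma : (barD1 (G₁ × G₂) M).comp pushSigma = barD1 G₁ M := by
  refine Finsupp.addHom_ext fun a m => ?_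
  simp only [AddMonoidHom.comp_apply, pushSigma_single, barD1_single, Prod.inv_mk, inv_one,
    hcompat]

include hcompat htriv in
theorem pushPi_comp_d2 :
    pushPi.comp (barD2 (G₁ × G₂) M) = (barD2 G₁ M).comp pairPi := by
  refine Finsupp.addHom_ext fun p m => ?_
  obtain ⟨⟨a, b⟩, ⟨c, d⟩⟩ := p
  simp only [AddMonoidHom.comp_apply, barD2_single, map_sub, map_add, pushPi_single,
    pairPi, Finsupp.liftAddHom_apply_single, Finsupp.singleAddHom_apply, Prod.inv_mk,
    Prod.mk_mul_mk, smul_pair hcompat htriv]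

include hcompat htriv in
theorem pushSigma_comp_d2 :
    pushSigma.comp (barD2 G₁ M) = (barD2 (G₁ × G₂) M).comp pairSigma := by
  refine Finsupp.addHom_ext fun p m => ?_
  obtain ⟨a, c⟩ := p
  simp only [AddMonoidHom.comp_apply, barD2_single, map_sub, map_add, pushSigma_single,
    pairSigma, Finsupp.liftAddHom_apply_single, Finsupp.singleAddHom_apply, Prod.inv_mk,
    Prod.mk_mul_mk, inv_one, one_mul, smul_pair hcompat htriv, hcompat]

theorem pushPi_comp_pushSigma :
    pushPi.comp (pushSigma : (G₁ →₀ M) →+ ((G₁ × G₂) →₀ M)) = AddMonoidHom.id _ := by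
  refine Finsupp.addHom_ext fun a m => ?_
  simp

include htriv in
theorem single_one_mem (hperf : commutator G₂ = ⊤) (b : G₂) (m : M) :
    Finsupp.single (((1 : G₁), b) : G₁ × G₂) m ∈ (barD2 (G₁ × G₂) M).range := by
  set R := (barD2 (G₁ × G₂) M).range with hR
  have key : ∀ c d : G₂,
      Finsupp.single (((1 : G₁), c) : G₁ × G₂) m + Finsupp.single (((1 : G₁), d) : G₁ × G₂) m
        - Finsupp.single (((1 : G₁), c * d) : G₁ × G₂) m ∈ R := by
    intro c d
    refine ⟨Finsupp.single ((((1 : G₁), c), ((1 : G₁), d)) : (G₁ × G₂) × (G₁ × G₂)) m, ?_⟩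
    rw [barD2_single]
    simp only [Prod.inv_mk, inv_one, htriv, Prod.mk_mul_mk, one_mul]
    abel
  let q : ((G₁ × G₂) →₀ M) →+ (((G₁ × G₂) →₀ M) ⧸ R) := QuotientAddGroup.mk' R
  let φ : G₂ →* Multiplicative (((G₁ × G₂) →₀ M) ⧸ R) :=
    MonoidHom.mk' (fun b => Multiplicative.ofAdd (q (Finsupp.single (((1 : G₁), b) : G₁ × G₂) m)))
      (by
        intro c d
        have h0 : q (Finsupp.single (((1 : G₁), c) : G₁ × G₂) m
            + Finsupp.single (((1 : G₁), d) : G₁ × G₂) m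
            - Finsupp.single (((1 : G₁), c * d) : G₁ × G₂) m) = 0 :=
          (QuotientAddGroup.eq_zero_iff _).mpr (key c d)
        rw [map_sub, map_add] at h0
        have h1 := sub_eq_zero.mp h0
        change Multiplicative.ofAdd (q _) = Multiplicative.ofAdd (q _ + q _)
        rw [h1])
  have hker : (⊤ : Subgroup G₂) ≤ φ.ker := hperf ▸ Abelianization.commutator_subset_ker φ
  have hb : φ b = 1 := hker (Subgroup.mem_top b)
  have : q (Finsupp.single (((1 : G₁), b) : G₁ × G₂) m) = 0 := hb
  exact (QuotientAddGroup.eq_zero_iff _).mp this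

include hcompat htriv in
theorem sub_pushSigma_pushPi_mem (hperf : commutator G₂ = ⊤) (x : (G₁ × G₂) →₀ M) :
    x - pushSigma (pushPi x) ∈ (barD2 (G₁ × G₂) M).range := by
  induction x using Finsupp.induction with
  | zero => simp only [map_zero, sub_zero]; exact zero_mem _
  | single_add g m f _ _ ih =>
    have hsplit : (Finsupp.single g m + f) - pushSigma (pushPi (Finsupp.single g m + f))
        = (Finsupp.single g m - pushSigma (pushPi (Finsupp.single g m)))
          + (f - pushSigma (pushPi f)) := by
      rw [map_add, map_add]; abel
    rw [hsplit]
    refine add_mem ?_ ih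
    obtain ⟨a, b⟩ := g
    rw [pushPi_single, pushSigma_single]
    have hd : barD2 (G₁ × G₂) M
        (Finsupp.single ((((a, 1) : G₁ × G₂), ((1, b) : G₁ × G₂))) m)
        = Finsupp.single (((1 : G₁), b) : G₁ × G₂) (a⁻¹ • m)
          - Finsupp.single ((a, b) : G₁ × G₂) m + Finsupp.single ((a, 1) : G₁ × G₂) m := by
      rw [barD2_single]
      simp only [Prod.inv_mk, inv_one, Prod.mk_mul_mk, one_mul, mul_one, hcompat]
    have heq : Finsupp.single ((a, b) : G₁ × G₂) m - Finsupp.single ((a, 1) : G₁ × G₂) m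
        = Finsupp.single (((1 : G₁), b) : G₁ × G₂) (a⁻¹ • m)
          - barD2 (G₁ × G₂) M
            (Finsupp.single ((((a, 1) : G₁ × G₂), ((1, b) : G₁ × G₂))) m) := by
      rw [hd]; abel
    rw [heq]
    exact sub_mem (single_one_mem htriv hperf b _) ⟨_, rfl⟩

end Product

/-- If `G = G₁ × G₂`, the factor `G₂` acts trivially on `M`, and `G₂` is perfect
(`H₁(G₂; ℤ) = 0`), then the projection `G → G₁` induces isomorphisms
`H₁(G; M) ≅ H₁(G₁; M)` and `H¹(G; M) ≅ H¹(G₁; M)`. -/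
theorem groupH1_coh1_of_product (G₁ G₂ M : Type*) [Group G₁] [Group G₂] [AddCommGroup M]
    [DistribMulAction (G₁ × G₂) M] [DistribMulAction G₁ M]
    (hcompat : ∀ (a : G₁) (m : M), ((a, 1) : G₁ × G₂) • m = a • m)
    (htriv : ∀ (b : G₂) (m : M), ((1, b) : G₁ × G₂) • m = m)
    (hperf : commutator G₂ = ⊤) :
    Nonempty (GroupH1 (G₁ × G₂) M ≃+ GroupH1 G₁ M) ∧
    Nonempty (GroupCoh1 (G₁ × G₂) M ≃+ GroupCoh1 G₁ M) := by
  constructor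
  · -- Homology
    have hπK : ∀ x : ((G₁ × G₂) →₀ M), x ∈ (barD1 (G₁ × G₂) M).ker →
        pushPi x ∈ (barD1 G₁ M).ker := by
      intro x hx
      have h := congrArg (fun f => f x) (d1_comp_pushPi hcompat htriv)
      simp only [AddMonoidHom.comp_apply] at h
      rw [AddMonoidHom.mem_ker, h]
      exact hx
    have hσK : ∀ x : (G₁ →₀ M), x ∈ (barD1 G₁ M).ker →
        pushSigma x ∈ (barD1 (G₁ × G₂) M).ker := by
      intro x hx
      have h := congrArg (fun f => f x) (d1_comp_pushSigma hcompat)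
      simp only [AddMonoidHom.comp_apply] at h
      rw [AddMonoidHom.mem_ker, h]
      exact hx
    let πK : (barD1 (G₁ × G₂) M).ker →+ (barD1 G₁ M).ker :=
      (pushPi.comp (barD1 (G₁ × G₂) M).ker.subtype).codRestrict _ (fun x => hπK x.1 x.2)
    let σK : (barD1 G₁ M).ker →+ (barD1 (G₁ × G₂) M).ker :=
      (pushSigma.comp (barD1 G₁ M).ker.subtype).codRestrict _ (fun x => hσK x.1 x.2)
    have hπKval : ∀ x, (πK x).1 = pushPi x.1 := fun x => rfl
    have hσKval : ∀ x, (σK x).1 = pushSigma x.1 := fun x => rfl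
    have hΦle : ((barD2 (G₁ × G₂) M).range.addSubgroupOf (barD1 (G₁ × G₂) M).ker) ≤
        AddSubgroup.comap πK ((barD2 G₁ M).range.addSubgroupOf (barD1 G₁ M).ker) := by
      intro x hx
      rw [AddSubgroup.mem_comap, AddSubgroup.mem_addSubgroupOf] at *
      obtain ⟨y, hy⟩ := hx
      refine ⟨pairPi y, ?_⟩
      have h := congrArg (fun f => f y) (pushPi_comp_d2 hcompat htriv)
      simp only [AddMonoidHom.comp_apply] at h
      rw [← h, hy, hπKval]
    have hΨle : ((barD2 G₁ M).range.addSubgroupOf (barD1 G₁ M).ker) ≤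
        AddSubgroup.comap σK ((barD2 (G₁ × G₂) M).range.addSubgroupOf (barD1 (G₁ × G₂) M).ker) := by
      intro x hx
      rw [AddSubgroup.mem_comap, AddSubgroup.mem_addSubgroupOf] at *
      obtain ⟨y, hy⟩ := hx
      refine ⟨pairSigma y, ?_⟩
      have h := congrArg (fun f => f y) (pushSigma_comp_d2 hcompat htriv)
      simp only [AddMonoidHom.comp_apply] at h
      rw [← h, hy, hσKval]
    let Φ : GroupH1 (G₁ × G₂) M →+ GroupH1 G₁ M := QuotientAddGroup.map _ _ πK hΦle
    let Ψ : GroupH1 G₁ M →+ GroupH1 (G₁ × G₂) M := QuotientAddGroup.map _ _ σK hΨle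
    refine ⟨{ toFun := Φ, invFun := Ψ, left_inv := ?_, right_inv := ?_,
              map_add' := Φ.map_add }⟩
    · intro y
      refine QuotientAddGroup.induction_on y (fun x => ?_)
      show (QuotientAddGroup.mk (σK (πK x)) :
        (barD1 (G₁ × G₂) M).ker ⧸ ((barD2 (G₁ × G₂) M).range.addSubgroupOf
          (barD1 (G₁ × G₂) M).ker)) = QuotientAddGroup.mk x
      rw [QuotientAddGroup.eq]
      rw [AddSubgroup.mem_addSubgroupOf]
      have : (-(σK (πK x)) + x : (barD1 (G₁ × G₂) M).ker).1
          = x.1 - pushSigma (pushPi x.1) := by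
        simp only [AddSubgroup.coe_add, AddSubgroup.coe_neg, hσKval, hπKval]
        abel
      rw [this]
      exact sub_pushSigma_pushPi_mem hcompat htriv hperf x.1
    · intro y
      refine QuotientAddGroup.induction_on y (fun x => ?_)
      show (QuotientAddGroup.mk (πK (σK x)) :
        (barD1 G₁ M).ker ⧸ ((barD2 G₁ M).range.addSubgroupOf (barD1 G₁ M).ker))
          = QuotientAddGroup.mk x
      congr 1
      apply Subtype.ext
      rw [hπKval, hσKval]
      exact congrArg (fun f => f x.1) (pushPi_comp_pushSigma (G₁ := G₁) (G₂ := G₂) (M := M))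
  · -- Cohomology
    have hsmul : ∀ (a : G₁) (b : G₂) (m : M), ((a, b) : G₁ × G₂) • m = a • m :=
      fun a b m => smul_pair hcompat htriv a b m
    have hvanish : ∀ f : (G₁ × G₂) → M, (∀ g h, f (g * h) = f g + g • f h) →
        ∀ b : G₂, f (((1 : G₁), b)) = 0 := by
      intro f hf
      let φ : G₂ →* Multiplicative M :=
        MonoidHom.mk' (fun b => Multiplicative.ofAdd (f (((1 : G₁), b)))) (by
          intro c d
          have h := hf (((1 : G₁), c)) (((1 : G₁), d))
          rw [htriv] at h
          have hm : ((((1 : G₁), c)) * (((1 : G₁), d)) : G₁ × G₂) = (((1 : G₁), c * d)) := by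
            simp
          rw [hm] at h
          exact congrArg Multiplicative.ofAdd h)
      intro b
      have hker : (⊤ : Subgroup G₂) ≤ φ.ker := hperf ▸ Abelianization.commutator_subset_ker φ
      have := hker (Subgroup.mem_top b)
      simpa [φ, MonoidHom.mem_ker] using this
    have key : ∀ f, f ∈ cocycles1 (G₁ × G₂) M → ∀ (a : G₁) (b : G₂),
        f (((a, b)) : G₁ × G₂) = f (((a, 1)) : G₁ × G₂) := by
      intro f hf a b
      have h := hf (((a, 1)) : G₁ × G₂) ((((1 : G₁), b)) : G₁ × G₂)
      rw [hvanish f hf b, smul_zero, add_zero] at h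
      have hm : ((((a : G₁), (1 : G₂))) * ((((1 : G₁), b))) : G₁ × G₂) = ((a, b) : G₁ × G₂) := by
        simp
      rw [hm] at h
      exact h
    let e : cocycles1 (G₁ × G₂) M ≃+ cocycles1 G₁ M :=
      { toFun := fun f => ⟨fun a => f.1 (((a, 1)) : G₁ × G₂), by
          intro a a'
          have h := f.2 (((a, 1)) : G₁ × G₂) (((a', 1)) : G₁ × G₂)
          rw [hcompat] at h
          simpa using h⟩
        invFun := fun f => ⟨fun g => f.1 g.1, by
          intro g h
          have hc := f.2 g.1 h.1
          rw [← hsmul g.1 g.2] at hc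
          simpa using hc⟩
        left_inv := by
          rintro ⟨f, hf⟩
          apply Subtype.ext
          funext g
          show f (g.1, 1) = f g
          rw [← key f hf g.1 g.2]
        right_inv := fun f => rfl
        map_add' := fun f₁ f₂ => rfl }
    have he : ((coboundaries1 (G₁ × G₂) M).addSubgroupOf (cocycles1 (G₁ × G₂) M)).map
          e.toAddMonoidHom
        = (coboundaries1 G₁ M).addSubgroupOf (cocycles1 G₁ M) := by
      ext f
      constructor
      · rintro ⟨g, hg, rfl⟩
        simp only [SetLike.mem_coe, AddSubgroup.mem_addSubgroupOf] at hg ⊢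
        obtain ⟨m, hm⟩ := hg
        refine ⟨m, fun a => ?_⟩
        show g.1 (((a, 1)) : G₁ × G₂) = a • m - m
        rw [hm, hcompat]
      · intro hf
        rw [AddSubgroup.mem_addSubgroupOf] at hf
        obtain ⟨m, hm⟩ := hf
        refine ⟨e.symm f, ?_, by simp⟩
        simp only [SetLike.mem_coe, AddSubgroup.mem_addSubgroupOf]
        refine ⟨m, fun g => ?_⟩
        show f.1 g.1 = g • m - m
        rw [hm, ← hsmul g.1 g.2]
    exact ⟨QuotientAddGroup.congr _ _ e he⟩
end

section
/- Let G be a group and M a G-module. For M an abelian group write M* = Hom(M, ℚ/ℤ), with G acting on M* by (g·f)(x) = f(g⁻¹·x). Then for every k ≥ 0 there is a natural isomorphism H^k(G; M*) ≅ (H_k(G; M))*. -/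
/-! Group homology `H_k(G; M)` and group cohomology `H^k(G; M)` in all degrees, via the
(inhomogeneous) bar resolution, and the duality `H^k(G; M*) ≅ (H_k(G; M))*` with
`M* = Hom(M, ℚ/ℤ)`. -/

/-- `ℚ/ℤ`, with the trivial `G`-action. -/
abbrev QZ := AddCircle (1 : ℚ)

section Defs

variable (G : Type*) [Group G] (M : Type*) [AddCommGroup M] [DistribMulAction G M]

/-- The `j`-th face map on bar `(n+1)`-tuples: drops the first entry (`j = 0`), multiplies an
adjacent pair (`0 < j < n+1`), or drops the last entry (`j = n+1`). -/
def barFace (n : ℕ) (j : Fin (n + 2)) (gs : Fin (n + 1) → G) : Fin n → G := fun i =>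
  if (i : ℕ) + 1 < (j : ℕ) then gs i.castSucc
  else if (i : ℕ) + 1 = (j : ℕ) then gs i.castSucc * gs i.succ
  else gs i.succ

/-- The bar-resolution boundary map on chains,
`d([g₁|⋯|g_{n+1}] ⊗ m) = [g₂|⋯|g_{n+1}] ⊗ (g₁⁻¹ • m) + ∑_{j=1}^{n} (−1)^j [⋯|gⱼg_{j+1}|⋯] ⊗ m
+ (−1)^{n+1} [g₁|⋯|g_n] ⊗ m`. -/
noncomputable def barChainDAux (n : ℕ) (gs : Fin (n + 1) → G) :
    M →+ ((Fin n → G) →₀ M) :=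
  (Finsupp.singleAddHom (barFace G n 0 gs)).comp
      (DistribMulAction.toAddMonoidHom M (gs 0)⁻¹)
    + ∑ j : Fin (n + 1),
        ((-1 : ℤ) ^ ((j : ℕ) + 1)) •
          (Finsupp.singleAddHom (barFace G n j.succ gs) : M →+ ((Fin n → G) →₀ M))

noncomputable def barChainD (n : ℕ) :
    ((Fin (n + 1) → G) →₀ M) →+ ((Fin n → G) →₀ M) :=
  Finsupp.liftAddHom (barChainDAux G M n)

/-- The `k`-cycles: all of `C₀` in degree `0`, and `ker d_k` in degree `k ≥ 1`. -/
noncomputable def barCycles : (k : ℕ) → AddSubgroup ((Fin k → G) →₀ M)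
  | 0 => ⊤
  | (k + 1) => (barChainD G M k).ker

/-- Group homology `H_k(G; M)`, computed from the bar resolution. -/
noncomputable def GroupHomology (k : ℕ) :=
  (barCycles G M k) ⧸ ((barChainD G M k).range.addSubgroupOf (barCycles G M k))

noncomputable instance (k : ℕ) : AddCommGroup (GroupHomology G M k) :=
  QuotientAddGroup.Quotient.addCommGroup _

/-- The bar-resolution coboundary map on cochains,
`(δf)(g₁,…,g_{n+1}) = g₁ • f(g₂,…,g_{n+1}) + ∑_{j=1}^{n} (−1)^j f(…,gⱼg_{j+1},…)
+ (−1)^{n+1} f(g₁,…,g_n)`. -/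
noncomputable def barCochainD (n : ℕ) :
    ((Fin n → G) → M) →+ ((Fin (n + 1) → G) → M) :=
  AddMonoidHom.mk'
    (fun f gs =>
      (gs 0) • f (barFace G n 0 gs)
        + ∑ j : Fin (n + 1),
            ((-1 : ℤ) ^ ((j : ℕ) + 1)) • f (barFace G n j.succ gs))
    (by
      intro f₁ f₂
      funext gs
      simp only [Pi.add_apply, smul_add, Finset.sum_add_distrib]
      abel)

/-- The `k`-cocycles `ker δ_k`. -/
noncomputable def barCocycles (k : ℕ) : AddSubgroup ((Fin k → G) → M) :=
  (barCochainD G M k).ker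

/-- The `k`-coboundaries: `0` in degree `0`, and `im δ_{k-1}` in degree `k ≥ 1`. -/
noncomputable def barCoboundaries : (k : ℕ) → AddSubgroup ((Fin k → G) → M)
  | 0 => ⊥
  | (k + 1) => (barCochainD G M k).range

/-- Group cohomology `H^k(G; M)`, computed from the bar resolution. -/
noncomputable def GroupCohomology (k : ℕ) :=
  (barCocycles G M k) ⧸ ((barCoboundaries G M k).addSubgroupOf (barCocycles G M k))

noncomputable instance (k : ℕ) : AddCommGroup (GroupCohomology G M k) :=
  QuotientAddGroup.Quotient.addCommGroup _

/-- The contragredient action of `G` on `M* = Hom(M, ℚ/ℤ)`: `(g • f) x = f (g⁻¹ • x)`. -/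
instance dualMulAction : MulAction G (M →+ QZ) where
  smul g f := f.comp (DistribMulAction.toAddMonoidHom M g⁻¹)
  one_smul f := by
    show f.comp _ = f
    ext x
    simp [DistribMulAction.toAddMonoidHom]
  mul_smul g h f := by
    show f.comp _ = (f.comp _).comp _
    ext x
    simp [DistribMulAction.toAddMonoidHom, mul_smul]

instance dualDistribMulAction : DistribMulAction G (M →+ QZ) where
  smul_zero g := rfl
  smul_add g f₁ f₂ := rfl

end Defs

lemma QZ.extension {B : Type*} [AddCommGroup B] (S : AddSubgroup B) (g : S →+ QZ) :
    ∃ F : B →+ QZ, ∀ s : S, F s = g s := by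
  obtain ⟨F, hF⟩ := (Module.Baer.of_divisible QZ).extension_property_addMonoidHom
    S.subtype Subtype.val_injective g
  exact ⟨F, fun s => by rw [← hF]; rfl⟩

lemma QZ.factor {B A : Type*} [AddCommGroup B] [AddCommGroup A] (d : B →+ A)
    (f : B →+ QZ) (hf : ∀ b ∈ d.ker, f b = 0) :
    ∃ H : A →+ QZ, ∀ b, H (d b) = f b := by
  let fbar : (B ⧸ d.ker) →+ QZ := QuotientAddGroup.lift d.ker f hf
  let e : B ⧸ d.ker ≃+ d.range := QuotientAddGroup.quotientKerEquivRange d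
  obtain ⟨H, hH⟩ := QZ.extension d.range (fbar.comp e.symm.toAddMonoidHom)
  refine ⟨H, fun b => ?_⟩
  have h1 : e (QuotientAddGroup.mk b) = ⟨d b, ⟨b, rfl⟩⟩ := rfl
  have h2 := hH ⟨d b, ⟨b, rfl⟩⟩
  rw [← h1] at h2
  simp [fbar] at h2
  exact h2

lemma dual_quotient_iso {B X : Type*} [AddCommGroup B] [AddCommGroup X]
    (Z : AddSubgroup B) (B₁ : AddSubgroup B) (e : X ≃+ (B →+ QZ)) (K I : AddSubgroup X)
    (hK : ∀ f : X, f ∈ K ↔ ∀ b ∈ B₁, e f b = 0)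
    (hI : ∀ f ∈ K, (f ∈ I ↔ ∀ z ∈ Z, e f z = 0)) :
    Nonempty ((↥K ⧸ I.addSubgroupOf K) ≃+ ((↥Z ⧸ B₁.addSubgroupOf Z) →+ QZ)) := by
  have lift_wd : ∀ f : K, ∀ z ∈ B₁.addSubgroupOf Z, ((e f.1).comp Z.subtype) z = 0 :=
    fun f z hz => (hK f.1).1 f.2 z.1 hz
  let Φ : ↥K →+ ((↥Z ⧸ B₁.addSubgroupOf Z) →+ QZ) :=
    { toFun := fun f => QuotientAddGroup.lift (B₁.addSubgroupOf Z)
        ((e f.1).comp Z.subtype) (lift_wd f)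
      map_zero' := by
        ext q
        simp
      map_add' := fun f₁ f₂ => by
        ext q
        simp
        rfl }
  have hΦ_mk : ∀ (f : K) (z : Z), Φ f (QuotientAddGroup.mk z) = e f.1 z.1 := fun f z => rfl
  have hker : Φ.ker = I.addSubgroupOf K := by
    ext f
    simp only [AddMonoidHom.mem_ker, AddSubgroup.mem_addSubgroupOf]
    constructor
    · intro h
      refine (hI f.1 f.2).2 (fun z hz => ?_)
      have := congrArg (fun ψ => ψ (QuotientAddGroup.mk (⟨z, hz⟩ : Z))) h
      simpa [hΦ_mk] using this
    · intro h
      ext q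
      simpa [hΦ_mk] using (hI f.1 f.2).1 h q.1 q.2
  have hsurj : Function.Surjective Φ := by
    intro ψ
    let q := QuotientAddGroup.quotientInfEquivSumNormalQuotient Z B₁
    let θ : ↥(Z ⊔ B₁) →+ QZ :=
      (ψ.comp q.symm.toAddMonoidHom).comp (QuotientAddGroup.mk' (B₁.addSubgroupOf (Z ⊔ B₁)))
    obtain ⟨F, hF⟩ := QZ.extension (Z ⊔ B₁) θ
    have hq_mk : ∀ z : Z, q (QuotientAddGroup.mk z)
        = QuotientAddGroup.mk (AddSubgroup.inclusion le_sup_left z) := fun z => rfl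
    have hfK : e.symm F ∈ K := by
      rw [hK]
      intro b hb
      rw [e.apply_symm_apply]
      have := hF ⟨b, AddSubgroup.mem_sup_right hb⟩
      rw [this]
      have h0 : (QuotientAddGroup.mk (⟨b, AddSubgroup.mem_sup_right hb⟩ : ↥(Z ⊔ B₁))
          : ↥(Z ⊔ B₁) ⧸ B₁.addSubgroupOf (Z ⊔ B₁)) = 0 :=
        (QuotientAddGroup.eq_zero_iff _).2 hb
      simp [θ, h0]
    refine ⟨⟨e.symm F, hfK⟩, ?_⟩
    ext z
    show (e (e.symm F)) z.1 = ψ (QuotientAddGroup.mk z)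
    rw [e.apply_symm_apply]
    have h2 := hF (AddSubgroup.inclusion le_sup_left z)
    have hcoe : ((AddSubgroup.inclusion (le_sup_left : Z ≤ Z ⊔ B₁) z : ↥(Z ⊔ B₁)) : B) = z.1 := rfl
    rw [hcoe] at h2
    rw [h2]
    show ψ (q.symm (QuotientAddGroup.mk (AddSubgroup.inclusion le_sup_left z))) = ψ _
    rw [← hq_mk, q.symm_apply_apply]
  exact ⟨(QuotientAddGroup.quotientAddEquivOfEq hker.symm).trans
    (QuotientAddGroup.quotientKerEquivOfSurjective Φ hsurj)⟩

section Compat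

variable (G : Type*) [Group G] (M : Type*) [AddCommGroup M] [DistribMulAction G M]

lemma barCompat (n : ℕ) (f : (Fin n → G) → (M →+ QZ)) :
    (Finsupp.liftAddHom (barCochainD G (M →+ QZ) n f) : ((Fin (n+1) → G) →₀ M) →+ QZ)
      = (Finsupp.liftAddHom (f : (Fin n → G) → (M →+ QZ))).comp (barChainD G M n) := by
  refine Finsupp.addHom_ext (fun gs m => ?_)
  have hL : (Finsupp.liftAddHom (barCochainD G (M →+ QZ) n f) : ((Fin (n+1) → G) →₀ M) →+ QZ)
      (Finsupp.single gs m) = barCochainD G (M →+ QZ) n f gs m := by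
    simp
  rw [hL]
  have hR : (barChainD G M n) (Finsupp.single gs m) = barChainDAux G M n gs m := by
    simp [barChainD]
  rw [AddMonoidHom.comp_apply, hR]
  rw [barChainDAux]
  simp only [AddMonoidHom.add_apply, AddMonoidHom.finset_sum_apply, AddMonoidHom.comp_apply,
    map_add, map_sum]
  rw [barCochainD]
  simp only [AddMonoidHom.mk'_apply, AddMonoidHom.add_apply, AddMonoidHom.finset_sum_apply]
  congr 1
  · simp only [Finsupp.singleAddHom_apply, Finsupp.liftAddHom_apply_single]
    rfl
  · refine Finset.sum_congr rfl (fun j _ => ?_)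
    simp
end Compat

/-- Duality between group homology and group cohomology: for any group `G`, any `G`-module
`M`, and any `k ≥ 0`, `H^k(G; M*) ≅ (H_k(G; M))*` where `M* = Hom(M, ℚ/ℤ)` carries the
contragredient `G`-action. -/
theorem groupCohomology_dual_iso (G : Type*) [Group G] (M : Type*) [AddCommGroup M]
    [DistribMulAction G M] (k : ℕ) :
    Nonempty (GroupCohomology G (M →+ QZ) k ≃+ ((GroupHomology G M k) →+ QZ)) := by
  classical
  let e : ((Fin k → G) → (M →+ QZ)) ≃+ (((Fin k → G) →₀ M) →+ QZ) := Finsupp.liftAddHom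
  have hK : ∀ f : (Fin k → G) → (M →+ QZ),
      f ∈ barCocycles G (M →+ QZ) k ↔ ∀ b ∈ (barChainD G M k).range, e f b = 0 := by
    intro f
    constructor
    · rintro hf b ⟨x, rfl⟩
      have hf' : barCochainD G (M →+ QZ) k f = 0 := hf
      have h1 : (Finsupp.liftAddHom f).comp (barChainD G M k) = 0 := by
        rw [← barCompat, hf']; simp
      exact congrFun (congrArg (fun (φ : _ →+ QZ) => ⇑φ) h1) x
    · intro h
      show barCochainD G (M →+ QZ) k f = 0
      have h1 : Finsupp.liftAddHom (barCochainD G (M →+ QZ) k f)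
          = (0 : ((Fin (k+1) → G) →₀ M) →+ QZ) := by
        rw [barCompat]
        exact AddMonoidHom.ext fun x => by simpa [e] using h _ ⟨x, rfl⟩
      exact (Finsupp.liftAddHom :
        ((Fin (k+1) → G) → (M →+ QZ)) ≃+ _).injective (by simpa using h1)
  have hI : ∀ f ∈ barCocycles G (M →+ QZ) k,
      (f ∈ barCoboundaries G (M →+ QZ) k ↔ ∀ z ∈ barCycles G M k, e f z = 0) := by
    intro f _
    cases k with
    | zero =>
      constructor
      · intro hb z _
        have : f = 0 := hb
        simp [this, e]
      · intro h
        show f ∈ (⊥ : AddSubgroup _)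
        have h1 : e f = 0 := AddMonoidHom.ext fun b => h b trivial
        simpa using e.injective (by simpa using h1)
    | succ k =>
      constructor
      · rintro ⟨g, rfl⟩ z hz
        have h1 : e (barCochainD G (M →+ QZ) k g) = (Finsupp.liftAddHom g).comp (barChainD G M k) :=
          barCompat G M k g
        rw [h1]
        have hz' : barChainD G M k z = 0 := hz
        simp [hz']
      · intro h
        obtain ⟨H, hH⟩ := QZ.factor (barChainD G M k) (e f) (fun b hb => h b hb)
        refine ⟨(Finsupp.liftAddHom :
          ((Fin k → G) → (M →+ QZ)) ≃+ (((Fin k → G) →₀ M) →+ QZ)).symm H, ?_⟩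
        apply e.injective
        rw [show e (barCochainD G (M →+ QZ) k (Finsupp.liftAddHom.symm H))
            = Finsupp.liftAddHom (barCochainD G (M →+ QZ) k (Finsupp.liftAddHom.symm H)) from rfl,
          barCompat]
        exact AddMonoidHom.ext fun b => by simpa using hH b
  exact dual_quotient_iso (barCycles G M k) ((barChainD G M k).range) e
    (barCocycles G (M →+ QZ) k) (barCoboundaries G (M →+ QZ) k) hK hI
end

section
/- Let Ω be the set of ℤ/2-quadratic forms on a 2g-dimensional symplectic ℤ/2-vector space V, i.e., functions f: V → ℤ/2 with f(x+y) = f(x) + f(y) + i(x,y) for all x, y, where i is the symplectic pairing. Fix a symplectic basis a₁, b₁, …, a_g, b_g of V. Then the Arf invariant Arf(f) = Σᵢ f(aᵢ)f(bᵢ) is independent of the choice of symplectic basis. -/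
/-- `V = (ℤ/2)^{2g}`. -/
abbrev V2 (g : ℕ) := Idx g → ZMod 2

/-- The standard symplectic pairing on `(ℤ/2)^{2g}`. -/
def pairing (g : ℕ) (x y : V2 g) : ZMod 2 :=
  ∑ j : Fin g, (x (Sum.inl j) * y (Sum.inr j) + x (Sum.inr j) * y (Sum.inl j))

/-- `f` is a quadratic refinement of the pairing: `f(x+y) = f(x) + f(y) + i(x,y)`. -/
def IsQuadraticForm (g : ℕ) (f : V2 g → ZMod 2) : Prop :=
  ∀ x y : V2 g, f (x + y) = f x + f y + pairing g x y

/-- `(a, b)` is a symplectic basis of `V`: it satisfies the symplectic pairing conditions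
and spans `V`. -/
def IsSymplecticBasis (g : ℕ) (a b : Fin g → V2 g) : Prop :=
  (∀ j l, pairing g (a j) (b l) = if j = l then 1 else 0) ∧
  (∀ j l, pairing g (a j) (a l) = 0) ∧
  (∀ j l, pairing g (b j) (b l) = 0) ∧
  Submodule.span (ZMod 2) (Set.range a ∪ Set.range b) = ⊤

/-- sign character -/
def chi (x : ZMod 2) : ℤ := 1 - 2 * x.val

lemma chi_add : ∀ x y : ZMod 2, chi (x + y) = chi x * chi y := by decide

lemma chi_inj (x y : ZMod 2) (h : chi x = chi y) : x = y := by revert h; revert x y; decide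

lemma chi_sum {ι : Type*} (s : Finset ι) (h : ι → ZMod 2) :
    chi (∑ i ∈ s, h i) = ∏ i ∈ s, chi (h i) := by
  induction s using Finset.cons_induction with
  | empty => simp [chi]
  | cons i s hi ih => rw [Finset.sum_cons, Finset.prod_cons, chi_add _ _, ih]

lemma pairing_add_left (g : ℕ) (x y z : V2 g) :
    pairing g (x + y) z = pairing g x z + pairing g y z := by
  simp only [pairing, Pi.add_apply]
  rw [← Finset.sum_add_distrib]; apply Finset.sum_congr rfl; intros; ring

lemma pairing_smul_left (g : ℕ) (c : ZMod 2) (x z : V2 g) :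
    pairing g (c • x) z = c * pairing g x z := by
  simp only [pairing, Pi.smul_apply, smul_eq_mul, Finset.mul_sum]
  apply Finset.sum_congr rfl; intros; ring

lemma pairing_comm (g : ℕ) (x y : V2 g) : pairing g x y = pairing g y x := by
  apply Finset.sum_congr rfl; intros; ring

lemma pairing_add_right (g : ℕ) (x y z : V2 g) :
    pairing g x (y + z) = pairing g x y + pairing g x z := by
  rw [pairing_comm, pairing_add_left, pairing_comm g y, pairing_comm g z]

lemma pairing_zero_right (g : ℕ) (x : V2 g) : pairing g x 0 = 0 := by
  simp [pairing]

lemma pairing_smul_right (g : ℕ) (c : ZMod 2) (x z : V2 g) :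
    pairing g x (c • z) = c * pairing g x z := by
  rw [pairing_comm, pairing_smul_left, pairing_comm]

lemma pairing_sum_right (g : ℕ) (x : V2 g) {ι : Type*} (s : Finset ι) (w : ι → V2 g) :
    pairing g x (∑ j ∈ s, w j) = ∑ j ∈ s, pairing g x (w j) := by
  induction s using Finset.cons_induction with
  | empty => simp [pairing_zero_right]
  | cons k t hk ih => rw [Finset.sum_cons, Finset.sum_cons, pairing_add_right, ih]

lemma two_cases : ∀ c : ZMod 2, c = 0 ∨ c = 1 := by decide

lemma qf_zero {g : ℕ} {f : V2 g → ZMod 2} (hf : IsQuadraticForm g f) : f 0 = 0 := by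
  have := hf 0 0
  simp only [add_zero, pairing_zero_right] at this
  linear_combination (norm := ring_nf) -this

lemma qf_sum {g : ℕ} {f : V2 g → ZMod 2} (hf : IsQuadraticForm g f)
    {ι : Type*} (s : Finset ι) (w : ι → V2 g)
    (h : ∀ i ∈ s, ∀ j ∈ s, i ≠ j → pairing g (w i) (w j) = 0) :
    f (∑ i ∈ s, w i) = ∑ i ∈ s, f (w i) := by
  induction s using Finset.cons_induction with
  | empty => simpa using qf_zero hf
  | cons i s hi ih =>
    rw [Finset.sum_cons, Finset.sum_cons, hf,
      ih (fun x hx y hy hxy => h x (Finset.mem_cons_of_mem hx) y (Finset.mem_cons_of_mem hy) hxy)]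
    have : pairing g (w i) (∑ j ∈ s, w j) = 0 := by
      rw [pairing_sum_right]
      apply Finset.sum_eq_zero
      intro j hj
      exact h i (Finset.mem_cons_self i s) j (Finset.mem_cons_of_mem hj)
        (fun he => hi (he ▸ hj))
    rw [this, add_zero]

lemma sum_zmod2 {M : Type*} [AddCommMonoid M] (h : ZMod 2 → M) :
    ∑ x : ZMod 2, h x = h 0 + h 1 := by
  have huniv : (Finset.univ : Finset (ZMod 2)) = {0, 1} := by decide
  rw [huniv, Finset.sum_insert (by decide), Finset.sum_singleton]

lemma factor (α β : ZMod 2) :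
    ∑ p : ZMod 2 × ZMod 2, chi (p.1 * α + p.2 * β + p.1 * p.2) = 2 * chi (α * β) := by
  rw [Fintype.sum_prod_type, sum_zmod2]
  rw [sum_zmod2, sum_zmod2]
  rcases two_cases α with h | h <;> rcases two_cases β with h' | h' <;> subst h h' <;>
    decide

/-- coordinate equivalence -/
def Ecoord (g : ℕ) : (Fin g → ZMod 2 × ZMod 2) ≃ V2 g where
  toFun w := Sum.elim (fun j => (w j).1) (fun j => (w j).2)
  invFun v := fun j => (v (Sum.inl j), v (Sum.inr j))
  left_inv w := rfl
  right_inv v := by funext i; cases i <;> rfl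

set_option maxHeartbeats 1000000 in
/-- key lemma: the signed count determines the Arf invariant for any symplectic basis -/
lemma key (g : ℕ) (f : V2 g → ZMod 2) (hf : IsQuadraticForm g f)
    (a b : Fin g → V2 g) (hab : IsSymplecticBasis g a b) :
    ∑ x : V2 g, chi (f x) = 2 ^ g * chi (∑ j : Fin g, f (a j) * f (b j)) := by
  obtain ⟨hab1, haa, hbb, hspan⟩ := hab
  -- the linear map Φ
  set Φ := Fintype.linearCombination (ZMod 2) (Sum.elim a b) with hΦ
  have hsurj : Function.Surjective Φ := by
    rw [← LinearMap.range_eq_top, Fintype.range_linearCombination, Set.Sum.elim_range]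
    exact hspan
  have hbij : Function.Bijective Φ :=
    ⟨Finite.injective_iff_surjective.mpr hsurj, hsurj⟩
  -- transport the sum along Φ
  rw [← Function.Bijective.sum_comp hbij (fun x => chi (f x))]
  -- equivalence with pairs
  rw [← Equiv.sum_comp (Ecoord g) (fun v => chi (f (Φ v)))]
  -- compute f (Φ (Ecoord g w))
  have hu : ∀ (c d : ZMod 2) (j : Fin g), f (c • a j + d • b j)
      = c * f (a j) + d * f (b j) + c * d := by
    intro c d j
    rcases two_cases c with hc | hc <;> rcases two_cases d with hd | hd <;> subst hc hd <;>
      simp [qf_zero hf, hf (a j) (b j), hab1 j j]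
  have hpu : ∀ (c d c' d' : ZMod 2) (j l : Fin g), j ≠ l →
      pairing g (c • a j + d • b j) (c' • a l + d' • b l) = 0 := by
    intro c d c' d' j l hjl
    have hba : ∀ j l : Fin g, pairing g (b j) (a l) = if l = j then 1 else 0 := by
      intro j l; rw [pairing_comm]; exact hab1 l j
    simp [pairing_add_left, pairing_add_right, pairing_smul_left, pairing_smul_right,
      haa, hbb, hab1, hba, hjl, Ne.symm hjl]
  have hfΦ : ∀ w : Fin g → ZMod 2 × ZMod 2,
      f (Φ (Ecoord g w)) = ∑ j : Fin g, ((w j).1 * f (a j) + (w j).2 * f (b j) + (w j).1 * (w j).2) := by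
    intro w
    have h1 : Φ (Ecoord g w) = ∑ j : Fin g, ((w j).1 • a j + (w j).2 • b j) := by
      rw [hΦ, Fintype.linearCombination_apply, Fintype.sum_sum_type, ← Finset.sum_add_distrib]
      rfl
    rw [h1, qf_sum hf Finset.univ _ (fun i _ j _ hij => hpu _ _ _ _ i j hij)]
    exact Finset.sum_congr rfl fun j _ => hu _ _ j
  calc ∑ w : Fin g → ZMod 2 × ZMod 2, chi (f (Φ (Ecoord g w)))
      = ∑ w : Fin g → ZMod 2 × ZMod 2, ∏ j : Fin g,
          chi ((w j).1 * f (a j) + (w j).2 * f (b j) + (w j).1 * (w j).2) := by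
        apply Finset.sum_congr rfl
        intro w _
        rw [hfΦ w, chi_sum]
    _ = ∏ j : Fin g, ∑ p : ZMod 2 × ZMod 2,
          chi (p.1 * f (a j) + p.2 * f (b j) + p.1 * p.2) :=
        (Fintype.prod_sum (fun j (p : ZMod 2 × ZMod 2) =>
          chi (p.1 * f (a j) + p.2 * f (b j) + p.1 * p.2))).symm
    _ = ∏ j : Fin g, 2 * chi (f (a j) * f (b j)) := by
        apply Finset.prod_congr rfl
        intro j _
        have : ∀ α β : ZMod 2, (∑ p : ZMod 2 × ZMod 2, chi (p.1 * α + p.2 * β + p.1 * p.2))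
            = 2 * chi (α * β) := by decide
        exact this _ _
    _ = 2 ^ g * chi (∑ j : Fin g, f (a j) * f (b j)) := by
        rw [Finset.prod_mul_distrib, Finset.prod_const, chi_sum]
        simp

/-- The Arf invariant `Arf(f) = Σⱼ f(aⱼ) f(bⱼ)` of a quadratic refinement `f` of the
symplectic pairing does not depend on the choice of symplectic basis. -/
theorem arf_invariant_well_defined (g : ℕ) (f : V2 g → ZMod 2)
    (hf : IsQuadraticForm g f)
    (a b a' b' : Fin g → V2 g)
    (hab : IsSymplecticBasis g a b) (hab' : IsSymplecticBasis g a' b') :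
    ∑ j : Fin g, f (a j) * f (b j) = ∑ j : Fin g, f (a' j) * f (b' j) := by
  have h1 := key g f hf a b hab
  have h2 := key g f hf a' b' hab'
  apply chi_inj
  have h3 : (2 : ℤ) ^ g * chi (∑ j : Fin g, f (a j) * f (b j))
      = 2 ^ g * chi (∑ j : Fin g, f (a' j) * f (b' j)) := by rw [← h1, ← h2]
  exact mul_left_cancel₀ (pow_ne_zero g (by norm_num)) h3
end
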